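/- Let f : [0,∞) → ℂ be locally integrable and W(t) := [[0, f(t)], [conj(f(t)), 0]] ∈ M₂(ℂ). Let 0 ≤ u₀ < u₁ < ⋯ < u_n and put ω_j := [u_{j−1}, u_j) for j = 1,…,n and ω := [u₀, u_n). Let G₁,…,G_n, G : [0,∞) → M₂(ℂ) be continuous functions with G_j(x) = 1 + ∫₀ˣ 1_{ω_j}(t)·W(t)·G_j(t) dt and G(x) = 1 + ∫₀ˣ 1_{ω}(t)·W(t)·G(t) dt for all x ≥ 0. Then for every x ≥ 0, G(x) = G_n(x)·G_{n−1}(x)⋯G₂(x)·G₁(x) (matrix product in descending order of the index). -/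

import Mathlib

open MeasureTheory Set

/-- The off-diagonal matrix potential built from a scalar function `f`. -/
noncomputable def WmatOf (f : ℝ → ℂ) (t : ℝ) : Matrix (Fin 2) (Fin 2) ℂ :=
  !![0, f t; (starRingEnd ℂ) (f t), 0]

/-- `G` is a (continuous) solution on `[0,∞)` of `G(x) = 1 + ∫₀ˣ W(t)·G(t) dt`
where `W(t) = [[0, f(t)], [conj f(t), 0]]`. -/
def IsSolutionOf (f : ℝ → ℂ) (G : ℝ → Matrix (Fin 2) (Fin 2) ℂ) : Prop :=
  ContinuousOn G (Set.Ici 0) ∧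
  ∀ x : ℝ, 0 ≤ x → ∀ i j : Fin 2,
    G x i j = (1 : Matrix (Fin 2) (Fin 2) ℂ) i j +
      ∫ t in (0:ℝ)..x, (WmatOf f t * G t) i j

/-- conjugation preserves interval integrability -/
lemma IntervalIntegrable.conjC {g : ℝ → ℂ} {a b : ℝ}
    (h : IntervalIntegrable g volume a b) :
    IntervalIntegrable (fun t => (starRingEnd ℂ) (g t)) volume a b := by
  constructor <;>
  · apply MeasureTheory.Integrable.mono' (by first | exact h.1.norm | exact h.2.norm)
    · exact (Complex.continuous_conj.comp_aestronglyMeasurable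
        (by first | exact h.1.aestronglyMeasurable | exact h.2.aestronglyMeasurable))
    · filter_upwards with t
      simp

lemma wmat_entry_norm_le (g : ℝ → ℂ) (t : ℝ) (i k : Fin 2) :
    ‖WmatOf g t i k‖ ≤ ‖g t‖ := by
  fin_cases i <;> fin_cases k <;>
    simp [WmatOf, Matrix.cons_val_zero, Matrix.cons_val_one]

lemma wmat_zero {g : ℝ → ℂ} {t : ℝ} (h : g t = 0) : WmatOf g t = 0 := by
  ext i k
  fin_cases i <;> fin_cases k <;> simp [WmatOf, h]

/-- continuity of a matrix entry -/
lemma entry_continuousOn {G : ℝ → Matrix (Fin 2) (Fin 2) ℂ}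
    (hG : ContinuousOn G (Set.Ici 0)) (k j : Fin 2) :
    ContinuousOn (fun t => G t k j) (Set.Ici 0) := by
  have h : Continuous (fun M : Matrix (Fin 2) (Fin 2) ℂ => M k j) :=
    (continuous_apply j).comp (continuous_apply k)
  exact h.comp_continuousOn hG

/-- Lemma A: entries of `W·G` are interval integrable. -/
lemma entry_intervalIntegrable {g : ℝ → ℂ} {G : ℝ → Matrix (Fin 2) (Fin 2) ℂ} {s x : ℝ}
    (hgi : IntervalIntegrable g volume s x) (hG : ContinuousOn G (Set.Ici 0))
    (hsub : Set.uIcc s x ⊆ Set.Ici 0) (i j : Fin 2) :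
    IntervalIntegrable (fun t => (WmatOf g t * G t) i j) volume s x := by
  have hmul : ∀ t, (WmatOf g t * G t) i j
      = WmatOf g t i 0 * G t 0 j + WmatOf g t i 1 * G t 1 j := by
    intro t
    rw [Matrix.mul_apply, Fin.sum_univ_two]
  simp only [hmul]
  have h0 : ContinuousOn (fun t => G t 0 j) (Set.uIcc s x) :=
    (entry_continuousOn hG 0 j).mono hsub
  have h1 : ContinuousOn (fun t => G t 1 j) (Set.uIcc s x) :=
    (entry_continuousOn hG 1 j).mono hsub
  fin_cases i
  · show IntervalIntegrable
      (fun t => WmatOf g t 0 0 * G t 0 j + WmatOf g t 0 1 * G t 1 j) volume s x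
    have e : (fun t => WmatOf g t 0 0 * G t 0 j + WmatOf g t 0 1 * G t 1 j)
        = fun t => g t * G t 1 j := by
      funext t; simp [WmatOf]
    rw [e]
    exact hgi.mul_continuousOn h1
  · show IntervalIntegrable
      (fun t => WmatOf g t 1 0 * G t 0 j + WmatOf g t 1 1 * G t 1 j) volume s x
    have e : (fun t => WmatOf g t 1 0 * G t 0 j + WmatOf g t 1 1 * G t 1 j)
        = fun t => (starRingEnd ℂ) (g t) * G t 0 j := by
      funext t; simp [WmatOf]
    rw [e]
    exact hgi.conjC.mul_continuousOn h0

/-- below the support the solution is 1 -/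
lemma sol_eq_one {f : ℝ → ℂ} {a b : ℝ} {P : ℝ → Matrix (Fin 2) (Fin 2) ℂ}
    (hP : IsSolutionOf (Set.indicator (Set.Ico a b) f) P)
    {x : ℝ} (hx : 0 ≤ x) (hxa : x ≤ a) : P x = 1 := by
  ext i j
  rw [hP.2 x hx i j]
  have hae : ∀ᵐ t : ℝ, t ∈ Set.uIoc 0 x →
      (WmatOf (Set.indicator (Set.Ico a b) f) t * P t) i j = 0 := by
    have hsing : (volume : Measure ℝ) {a} = 0 := measure_singleton a
    have hne : ∀ᵐ t : ℝ, t ≠ a := by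
      rw [MeasureTheory.ae_iff]
      simpa using hsing
    filter_upwards [hne] with t ht hmem
    rw [Set.uIoc_of_le hx] at hmem
    have : Set.indicator (Set.Ico a b) f t = 0 := by
      apply Set.indicator_of_notMem
      intro hmem'
      have : a ≤ t := hmem'.1
      have : t < a := lt_of_le_of_ne (hmem.2.trans hxa) ht
      linarith
    rw [wmat_zero this, Matrix.zero_mul, Matrix.zero_apply]
  rw [intervalIntegral.integral_congr_ae hae]
  simp

/-- above the support the solution is constant -/
lemma sol_eq_const {f : ℝ → ℂ} {a b : ℝ} {P : ℝ → Matrix (Fin 2) (Fin 2) ℂ}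
    (hP : IsSolutionOf (Set.indicator (Set.Ico a b) f) P)
    (hfi : ∀ x : ℝ, 0 ≤ x → IntervalIntegrable
      (Set.indicator (Set.Ico a b) f) volume 0 x)
    {x : ℝ} (hb : 0 ≤ b) (hbx : b ≤ x) : P x = P b := by
  have hx : 0 ≤ x := hb.trans hbx
  ext i j
  rw [hP.2 x hx i j, hP.2 b hb i j]
  have h1 : IntervalIntegrable
      (fun t => (WmatOf (Set.indicator (Set.Ico a b) f) t * P t) i j) volume 0 b :=
    entry_intervalIntegrable (hfi b hb) hP.1
      (by rw [Set.uIcc_of_le hb]; exact Set.Icc_subset_Ici_self) i j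
  have h2 : IntervalIntegrable
      (fun t => (WmatOf (Set.indicator (Set.Ico a b) f) t * P t) i j) volume 0 x :=
    entry_intervalIntegrable (hfi x hx) hP.1
      (by rw [Set.uIcc_of_le hx]; exact Set.Icc_subset_Ici_self) i j
  have hsplit := intervalIntegral.integral_interval_sub_left h2 h1
  have hzero : (∫ t in b..x,
      (WmatOf (Set.indicator (Set.Ico a b) f) t * P t) i j) = 0 := by
    rw [intervalIntegral.integral_congr (g := fun _ => 0), intervalIntegral.integral_zero]
    intro t hmem
    rw [Set.uIcc_of_le hbx] at hmem
    have h0 : Set.indicator (Set.Ico a b) f t = 0 := by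
      apply Set.indicator_of_notMem
      intro hmem'
      exact absurd hmem'.2 (not_lt.2 hmem.1)
    show (WmatOf (Set.indicator (Set.Ico a b) f) t * P t) i j = 0
    rw [wmat_zero h0, Matrix.zero_mul, Matrix.zero_apply]
  have : (∫ t in (0:ℝ)..x, (WmatOf (Set.indicator (Set.Ico a b) f) t * P t) i j)
      = ∫ t in (0:ℝ)..b, (WmatOf (Set.indicator (Set.Ico a b) f) t * P t) i j := by
    rw [← hsplit] at hzero
    linear_combination (norm := module) hzero
  rw [this]

/-- Gluing lemma : product of solutions on adjacent intervals -/
lemma glue {f : ℝ → ℂ}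
    (hfi : ∀ x : ℝ, 0 ≤ x → IntervalIntegrable f volume 0 x)
    {a b c : ℝ} (h0a : 0 ≤ a) (hab : a ≤ b) (hbc : b ≤ c)
    {P Q : ℝ → Matrix (Fin 2) (Fin 2) ℂ}
    (hP : IsSolutionOf (Set.indicator (Set.Ico a b) f) P)
    (hQ : IsSolutionOf (Set.indicator (Set.Ico b c) f) Q) :
    IsSolutionOf (Set.indicator (Set.Ico a c) f) (fun x => Q x * P x) := by
  have h0b : 0 ≤ b := h0a.trans hab
  have hR : ContinuousOn (fun t => Q t * P t) (Set.Ici 0) := hQ.1.mul hP.1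
  have hind : ∀ (a' b' : ℝ), ∀ y : ℝ, 0 ≤ y →
      IntervalIntegrable (Set.indicator (Set.Ico a' b') f) volume 0 y := by
    intro a' b' y hy
    rw [intervalIntegrable_iff_integrableOn_Ioc_of_le hy]
    exact ((intervalIntegrable_iff_integrableOn_Ioc_of_le hy).1 (hfi y hy)).indicator
      measurableSet_Ico
  have hne : ∀ (r : ℝ), ∀ᵐ t : ℝ, t ≠ r := by
    intro r
    rw [MeasureTheory.ae_iff]
    simpa using measure_singleton r
  -- congruence of the two integrands on `[0, y]` for `y ≤ b`
  have hcongr : ∀ (i j : Fin 2) (y : ℝ), 0 ≤ y → y ≤ b →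
      (∫ t in (0:ℝ)..y, (WmatOf (Set.indicator (Set.Ico a c) f) t * (Q t * P t)) i j)
        = ∫ t in (0:ℝ)..y, (WmatOf (Set.indicator (Set.Ico a b) f) t * P t) i j := by
    intro i j y hy hyb
    apply intervalIntegral.integral_congr_ae
    filter_upwards [hne b] with t htb hmem
    rw [Set.uIoc_of_le hy] at hmem
    have h0t : 0 ≤ t := hmem.1.le
    have htb' : t < b := lt_of_le_of_ne (hmem.2.trans hyb) htb
    have hindeq : Set.indicator (Set.Ico a c) f t = Set.indicator (Set.Ico a b) f t := by
      by_cases hta : a ≤ t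
      · rw [Set.indicator_of_mem (Set.mem_Ico.2 ⟨hta, htb'.trans_le hbc⟩),
          Set.indicator_of_mem (Set.mem_Ico.2 ⟨hta, htb'⟩)]
      · rw [Set.indicator_of_notMem (fun hm => hta hm.1),
          Set.indicator_of_notMem (fun hm => hta hm.1)]
    have hQt : Q t = 1 := sol_eq_one hQ h0t htb'.le
    have hW : WmatOf (Set.indicator (Set.Ico a c) f) t
        = WmatOf (Set.indicator (Set.Ico a b) f) t := by
      unfold WmatOf; rw [hindeq]
    rw [hW, hQt, one_mul]
  constructor
  · exact hR
  intro x hx i j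
  show (Q x * P x) i j = (1 : Matrix (Fin 2) (Fin 2) ℂ) i j +
    ∫ t in (0:ℝ)..x, (WmatOf (Set.indicator (Set.Ico a c) f) t * (Q t * P t)) i j
  by_cases hxb : x ≤ b
  · rw [sol_eq_one hQ hx hxb, one_mul, hcongr i j x hx hxb, hP.2 x hx i j]
  · push_neg at hxb
    have hbx : b ≤ x := hxb.le
    have hPx : P x = P b := sol_eq_const hP (hind a b) h0b hbx
    have hIac1 : IntervalIntegrable
        (fun t => (WmatOf (Set.indicator (Set.Ico a c) f) t * (Q t * P t)) i j)
        volume 0 b :=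
      entry_intervalIntegrable (hind a c b h0b) hR
        (by rw [Set.uIcc_of_le h0b]; exact Set.Icc_subset_Ici_self) i j
    have hIac2 : IntervalIntegrable
        (fun t => (WmatOf (Set.indicator (Set.Ico a c) f) t * (Q t * P t)) i j)
        volume b x :=
      (entry_intervalIntegrable (hind a c x hx) hR
        (by rw [Set.uIcc_of_le hx]; exact Set.Icc_subset_Ici_self) i j).mono_set
        (by rw [Set.uIcc_of_le hbx, Set.uIcc_of_le hx]
            exact Set.Icc_subset_Icc_left h0b)
    rw [← intervalIntegral.integral_add_adjacent_intervals hIac1 hIac2]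
    have e1 : (∫ t in (0:ℝ)..b,
        (WmatOf (Set.indicator (Set.Ico a c) f) t * (Q t * P t)) i j)
        = P b i j - (1 : Matrix (Fin 2) (Fin 2) ℂ) i j := by
      rw [hcongr i j b h0b le_rfl, hP.2 b h0b i j]; ring
    have e2 : (∫ t in b..x,
        (WmatOf (Set.indicator (Set.Ico a c) f) t * (Q t * P t)) i j)
        = ∑ k, (Q x i k - (1 : Matrix (Fin 2) (Fin 2) ℂ) i k) * P b k j := by
      have step1 : (∫ t in b..x,
          (WmatOf (Set.indicator (Set.Ico a c) f) t * (Q t * P t)) i j)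
          = ∫ t in b..x,
            ∑ k, (WmatOf (Set.indicator (Set.Ico b c) f) t * Q t) i k * P b k j := by
        apply intervalIntegral.integral_congr_ae
        filter_upwards with t hmem
        rw [Set.uIoc_of_le hbx] at hmem
        have hbt : b < t := hmem.1
        have h0t : 0 ≤ t := h0b.trans hbt.le
        have hindeq : Set.indicator (Set.Ico a c) f t
            = Set.indicator (Set.Ico b c) f t := by
          by_cases htc : t < c
          · rw [Set.indicator_of_mem (Set.mem_Ico.2 ⟨hab.trans hbt.le, htc⟩),
              Set.indicator_of_mem (Set.mem_Ico.2 ⟨hbt.le, htc⟩)]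
          · rw [Set.indicator_of_notMem (fun hm => htc hm.2),
              Set.indicator_of_notMem (fun hm => htc hm.2)]
        have hPt : P t = P b := sol_eq_const hP (hind a b) h0b hbt.le
        have hW : WmatOf (Set.indicator (Set.Ico a c) f) t
            = WmatOf (Set.indicator (Set.Ico b c) f) t := by
          unfold WmatOf; rw [hindeq]
        rw [hW, hPt, ← Matrix.mul_assoc, Matrix.mul_apply]
      rw [step1, intervalIntegral.integral_finset_sum]
      · congr 1
        funext k
        have hQint : ∀ y : ℝ, 0 ≤ y → IntervalIntegrable
            (fun t => (WmatOf (Set.indicator (Set.Ico b c) f) t * Q t) i k)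
            volume 0 y := fun y hy =>
          entry_intervalIntegrable (hind b c y hy) hQ.1
            (by rw [Set.uIcc_of_le hy]; exact Set.Icc_subset_Ici_self) i k
        have hsub : (∫ t in b..x,
            (WmatOf (Set.indicator (Set.Ico b c) f) t * Q t) i k)
            = Q x i k - (1 : Matrix (Fin 2) (Fin 2) ℂ) i k := by
          have ex := hQ.2 x hx i k
          have eb := hQ.2 b h0b i k
          have hQb : Q b i k = (1 : Matrix (Fin 2) (Fin 2) ℂ) i k := by
            rw [sol_eq_one hQ h0b le_rfl]
          rw [← intervalIntegral.integral_interval_sub_left (hQint x hx) (hQint b h0b)]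
          linear_combination -ex + eb - hQb
        calc (∫ t in b..x,
            (WmatOf (Set.indicator (Set.Ico b c) f) t * Q t) i k * P b k j)
            = (∫ t in b..x,
              (WmatOf (Set.indicator (Set.Ico b c) f) t * Q t) i k) * P b k j := by
              simpa [smul_eq_mul] using
                intervalIntegral.integral_smul_const (𝕜 := ℂ)
                  (f := fun t => (WmatOf (Set.indicator (Set.Ico b c) f) t * Q t) i k)
                  (c := P b k j) (a := b) (b := x) (μ := volume)
          _ = (Q x i k - (1 : Matrix (Fin 2) (Fin 2) ℂ) i k) * P b k j := by rw [hsub]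
      · intro k _
        exact ((entry_intervalIntegrable (hind b c x hx) hQ.1
          (by rw [Set.uIcc_of_le hx]; exact Set.Icc_subset_Ici_self) i k).mono_set
          (by rw [Set.uIcc_of_le hbx, Set.uIcc_of_le hx]
              exact Set.Icc_subset_Icc_left h0b)).mul_const _
    rw [e1, e2, hPx, Matrix.mul_apply, Fin.sum_univ_two, Fin.sum_univ_two]
    fin_cases i <;> fin_cases j <;> simp [Matrix.one_apply] <;> ring

/-- pointwise bound for the entries of `W·M` -/
lemma wmat_bound (g : ℝ → ℂ) (t : ℝ) (M : Matrix (Fin 2) (Fin 2) ℂ) :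
    (∑ i : Fin 2, ∑ j : Fin 2, ‖(WmatOf g t * M) i j‖)
      ≤ 2 * ‖g t‖ * ∑ i : Fin 2, ∑ j : Fin 2, ‖M i j‖ := by
  have h : ∀ i j : Fin 2, ‖(WmatOf g t * M) i j‖ ≤ ‖g t‖ * (‖M 0 j‖ + ‖M 1 j‖) := by
    intro i j
    rw [Matrix.mul_apply, Fin.sum_univ_two]
    calc ‖WmatOf g t i 0 * M 0 j + WmatOf g t i 1 * M 1 j‖
        ≤ ‖WmatOf g t i 0 * M 0 j‖ + ‖WmatOf g t i 1 * M 1 j‖ := norm_add_le _ _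
      _ = ‖WmatOf g t i 0‖ * ‖M 0 j‖ + ‖WmatOf g t i 1‖ * ‖M 1 j‖ := by
          rw [norm_mul, norm_mul]
      _ ≤ ‖g t‖ * ‖M 0 j‖ + ‖g t‖ * ‖M 1 j‖ :=
          add_le_add
            (mul_le_mul_of_nonneg_right (wmat_entry_norm_le g t i 0) (norm_nonneg _))
            (mul_le_mul_of_nonneg_right (wmat_entry_norm_le g t i 1) (norm_nonneg _))
      _ = ‖g t‖ * (‖M 0 j‖ + ‖M 1 j‖) := by ring
  calc (∑ i : Fin 2, ∑ j : Fin 2, ‖(WmatOf g t * M) i j‖)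
      ≤ ∑ i : Fin 2, ∑ j : Fin 2, ‖g t‖ * (‖M 0 j‖ + ‖M 1 j‖) :=
        Finset.sum_le_sum fun i _ => Finset.sum_le_sum fun j _ => h i j
    _ = 2 * ‖g t‖ * ∑ i : Fin 2, ∑ j : Fin 2, ‖M i j‖ := by
        simp only [Fin.sum_univ_two]
        ring

set_option maxHeartbeats 1000000 in
/-- uniqueness of solutions -/
lemma sol_unique {g : ℝ → ℂ}
    (hgi : ∀ x : ℝ, 0 ≤ x → IntervalIntegrable g volume 0 x)
    {P Q : ℝ → Matrix (Fin 2) (Fin 2) ℂ}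
    (hP : IsSolutionOf g P) (hQ : IsSolutionOf g Q) :
    ∀ x : ℝ, 0 ≤ x → P x = Q x := by
  set φ : ℝ → ℝ := fun t => ∑ i : Fin 2, ∑ j : Fin 2, ‖P t i j - Q t i j‖ with hφdef
  have hφc : ContinuousOn φ (Set.Ici 0) := by
    apply continuousOn_finset_sum
    intro i _
    apply continuousOn_finset_sum
    intro j _
    exact ((entry_continuousOn hP.1 i j).sub (entry_continuousOn hQ.1 i j)).norm
  have hφnn : ∀ t : ℝ, 0 ≤ φ t := fun t =>
    Finset.sum_nonneg fun i _ => Finset.sum_nonneg fun j _ => norm_nonneg _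
  have hsubIci : ∀ {y : ℝ}, 0 ≤ y → Set.uIcc 0 y ⊆ Set.Ici 0 := by
    intro y hy
    rw [Set.uIcc_of_le hy]
    exact Set.Icc_subset_Ici_self
  have hmsub : ∀ {s x : ℝ}, 0 ≤ s → s ≤ x → Set.uIcc s x ⊆ Set.uIcc 0 x := by
    intro s x h0s hsx
    rw [Set.uIcc_of_le hsx, Set.uIcc_of_le (h0s.trans hsx)]
    exact Set.Icc_subset_Icc_left h0s
  have hgsx : ∀ {s x : ℝ}, 0 ≤ s → s ≤ x → IntervalIntegrable g volume s x :=
    fun {s x} h0s hsx => (hgi x (h0s.trans hsx)).mono_set (hmsub h0s hsx)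
  have hDeq : ∀ (s x : ℝ), 0 ≤ s → s ≤ x → ∀ i j : Fin 2,
      P x i j - Q x i j = (P s i j - Q s i j)
        + ∫ t in s..x, (WmatOf g t * (P t - Q t)) i j := by
    intro s x h0s hsx i j
    have hx : 0 ≤ x := h0s.trans hsx
    have hIP := fun (y : ℝ) (hy : 0 ≤ y) =>
      entry_intervalIntegrable (hgi y hy) hP.1 (hsubIci hy) i j
    have hIQ := fun (y : ℝ) (hy : 0 ≤ y) =>
      entry_intervalIntegrable (hgi y hy) hQ.1 (hsubIci hy) i j
    have splitP := intervalIntegral.integral_interval_sub_left (hIP x hx) (hIP s h0s)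
    have splitQ := intervalIntegral.integral_interval_sub_left (hIQ x hx) (hIQ s h0s)
    have hsub : (∫ t in s..x, (WmatOf g t * (P t - Q t)) i j)
        = (∫ t in s..x, (WmatOf g t * P t) i j)
          - ∫ t in s..x, (WmatOf g t * Q t) i j := by
      rw [← intervalIntegral.integral_sub ((hIP x hx).mono_set (hmsub h0s hsx))
        ((hIQ x hx).mono_set (hmsub h0s hsx))]
      apply intervalIntegral.integral_congr
      intro t _
      simp [Matrix.mul_sub, Matrix.sub_apply]
    rw [hP.2 x hx i j, hQ.2 x hx i j, hP.2 s h0s i j, hQ.2 s h0s i j, hsub,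
      ← splitP, ← splitQ]
    ring
  have hkey : ∀ (s x : ℝ), 0 ≤ s → s ≤ x →
      φ x ≤ φ s + ∫ t in s..x, 2 * ‖g t‖ * φ t := by
    intro s x h0s hsx
    have hx : 0 ≤ x := h0s.trans hsx
    have hIci : Set.uIcc s x ⊆ Set.Ici 0 := (hmsub h0s hsx).trans (hsubIci hx)
    have hDint : ∀ i j : Fin 2,
        IntervalIntegrable (fun t => (WmatOf g t * (P t - Q t)) i j) volume s x :=
      fun i j => entry_intervalIntegrable (hgsx h0s hsx) (hP.1.sub hQ.1) hIci i j
    have hφint : IntervalIntegrable (fun t => 2 * ‖g t‖ * φ t) volume s x := by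
      have h2 := ((hgsx h0s hsx).norm.mul_continuousOn (hφc.mono hIci)).const_mul (2:ℝ)
      simpa [mul_assoc] using h2
    have hsum : IntervalIntegrable
        (fun t => ∑ i : Fin 2, ∑ j : Fin 2, ‖(WmatOf g t * (P t - Q t)) i j‖)
        volume s x := by
      simp only [Fin.sum_univ_two]
      exact ((hDint 0 0).norm.add (hDint 0 1).norm).add
        ((hDint 1 0).norm.add (hDint 1 1).norm)
    calc φ x ≤ ∑ i : Fin 2, ∑ j : Fin 2, (‖P s i j - Q s i j‖
          + ‖∫ t in s..x, (WmatOf g t * (P t - Q t)) i j‖) := by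
          apply Finset.sum_le_sum
          intro i _
          apply Finset.sum_le_sum
          intro j _
          rw [hDeq s x h0s hsx i j]
          exact norm_add_le _ _
      _ = φ s + ∑ i : Fin 2, ∑ j : Fin 2,
            ‖∫ t in s..x, (WmatOf g t * (P t - Q t)) i j‖ := by
          rw [hφdef]
          simp [Finset.sum_add_distrib]
      _ ≤ φ s + ∑ i : Fin 2, ∑ j : Fin 2,
            ∫ t in s..x, ‖(WmatOf g t * (P t - Q t)) i j‖ := by
          apply add_le_add le_rfl
          apply Finset.sum_le_sum
          intro i _
          apply Finset.sum_le_sum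
          intro j _
          exact intervalIntegral.norm_integral_le_integral_norm hsx
      _ = φ s + ∫ t in s..x, ∑ i : Fin 2, ∑ j : Fin 2,
            ‖(WmatOf g t * (P t - Q t)) i j‖ := by
          congr 1
          rw [intervalIntegral.integral_finset_sum
            (f := fun i t => ∑ j : Fin 2, ‖(WmatOf g t * (P t - Q t)) i j‖)
            (fun i _ => by
              simp only [Fin.sum_univ_two]
              exact (hDint i 0).norm.add (hDint i 1).norm)]
          exact Finset.sum_congr rfl fun i _ =>
            (intervalIntegral.integral_finset_sum
              (f := fun j t => ‖(WmatOf g t * (P t - Q t)) i j‖)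
              (fun j _ => (hDint i j).norm)).symm
      _ ≤ φ s + ∫ t in s..x, 2 * ‖g t‖ * φ t := by
          apply add_le_add le_rfl
          apply intervalIntegral.integral_mono_on hsx hsum hφint
          intro t _
          have hb := wmat_bound g t (P t - Q t)
          simp only [Matrix.sub_apply] at hb
          simpa [hφdef] using hb
  -- everything vanishes
  have hzero : ∀ x : ℝ, 0 ≤ x → φ x = 0 := by
    intro x₀ hx₀
    have hsubset : Set.Icc (0:ℝ) x₀ ⊆ {z : ℝ | φ z = 0} := by
      apply IsClosed.Icc_subset_of_forall_exists_gt
      · have he : {z : ℝ | φ z = 0} ∩ Set.Icc 0 x₀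
            = Set.Icc (0:ℝ) x₀ ∩ φ ⁻¹' {0} := by
          ext z
          simp [and_comm]
        rw [he]
        exact (hφc.mono Set.Icc_subset_Ici_self).preimage_isClosed_of_isClosed
          isClosed_Icc isClosed_singleton
      · show φ 0 = 0
        have h00 : ∀ i j : Fin 2, P 0 i j - Q 0 i j = 0 := by
          intro i j
          rw [hP.2 0 le_rfl i j, hQ.2 0 le_rfl i j]
          simp
        simp [hφdef, h00]
      · rintro z ⟨hzφ, hz0, hzx⟩ y hy
        have hz1 : z ≤ z + 1 := by linarith
        have hgII : IntervalIntegrable (fun t => 2 * ‖g t‖) volume z (z+1) :=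
          (hgsx hz0 hz1).norm.const_mul (2:ℝ)
        have hψT : Filter.Tendsto (fun w => ∫ t in z..w, 2 * ‖g t‖)
            (nhdsWithin z (Set.uIcc z (z+1))) (nhds 0) := by
          have hψc := intervalIntegral.continuousOn_primitive_interval'
            (a := z) (b₁ := z) (b₂ := z + 1) hgII Set.left_mem_uIcc
          have h2 : Filter.Tendsto (fun w => ∫ t in z..w, 2 * ‖g t‖)
              (nhdsWithin z (Set.uIcc z (z+1)))
              (nhds (∫ t in z..z, 2 * ‖g t‖)) := hψc z Set.left_mem_uIcc
          rwa [intervalIntegral.integral_same] at h2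
        have hev : ∀ᶠ w in nhdsWithin z (Set.uIcc z (z+1)),
            (∫ t in z..w, 2 * ‖g t‖) < 1/2 :=
          hψT (Iio_mem_nhds (by norm_num))
        set m := min y (z + 1) with hm
        have hzm : z < m := lt_min hy (by linarith)
        have hsm : Set.Ioc z m ⊆ Set.uIcc z (z+1) := by
          rw [Set.uIcc_of_le hz1]
          exact fun t ht => ⟨ht.1.le, ht.2.trans (min_le_right _ _)⟩
        have : (nhdsWithin z (Set.Ioc z m)).NeBot := left_nhdsWithin_Ioc_neBot hzm
        obtain ⟨w, hwψ, hw⟩ :=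
          ((hev.filter_mono (nhdsWithin_mono z hsm)).and self_mem_nhdsWithin).exists
        -- hwψ : ∫ t in z..w, 2‖g t‖ < 1/2 ; hw : w ∈ Ioc z m
        have hzw : z ≤ w := hw.1.le
        have hIccIci : Set.Icc z w ⊆ Set.Ici 0 := fun t ht => hz0.trans ht.1
        obtain ⟨t₀, ht₀, hmax⟩ := isCompact_Icc.exists_isMaxOn
          (Set.nonempty_Icc.2 hzw) (hφc.mono hIccIci)
        have hzt₀ : z ≤ t₀ := ht₀.1
        have ht₀w : t₀ ≤ w := ht₀.2
        have hgn1 : IntervalIntegrable (fun t => 2 * ‖g t‖) volume z t₀ :=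
          (hgsx hz0 hzt₀).norm.const_mul (2:ℝ)
        have hgn2 : IntervalIntegrable (fun t => 2 * ‖g t‖) volume z w :=
          (hgsx hz0 hzw).norm.const_mul (2:ℝ)
        have hφint : IntervalIntegrable (fun t => 2 * ‖g t‖ * φ t) volume z t₀ := by
          have hIci : Set.uIcc z t₀ ⊆ Set.Ici 0 :=
            (hmsub hz0 hzt₀).trans (hsubIci (hz0.trans hzt₀))
          have h2 := ((hgsx hz0 hzt₀).norm.mul_continuousOn (hφc.mono hIci)).const_mul (2:ℝ)
          simpa [mul_assoc] using h2
        have hstep1 : φ t₀ ≤ ∫ t in z..t₀, 2 * ‖g t‖ * φ t := by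
          have := hkey z t₀ hz0 hzt₀
          rwa [hzφ, zero_add] at this
        have hstep2 : (∫ t in z..t₀, 2 * ‖g t‖ * φ t)
            ≤ ∫ t in z..t₀, 2 * ‖g t‖ * φ t₀ := by
          apply intervalIntegral.integral_mono_on hzt₀ hφint (hgn1.mul_const _)
          intro t ht
          have htw : t ∈ Set.Icc z w := ⟨ht.1, ht.2.trans ht₀w⟩
          exact mul_le_mul_of_nonneg_left (hmax htw) (by positivity)
        have hstep3 : (∫ t in z..t₀, 2 * ‖g t‖ * φ t₀)
            = (∫ t in z..t₀, 2 * ‖g t‖) * φ t₀ :=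
          intervalIntegral.integral_mul_const _ _
        have hstep4 : (∫ t in z..t₀, 2 * ‖g t‖) ≤ ∫ t in z..w, 2 * ‖g t‖ := by
          have hsplit := intervalIntegral.integral_interval_sub_left hgn2 hgn1
          have hpos : 0 ≤ ∫ t in t₀..w, 2 * ‖g t‖ :=
            intervalIntegral.integral_nonneg ht₀w (fun t _ => by positivity)
          linarith
        have ht₀0 : φ t₀ ≤ 0 := by
          have h1 : φ t₀ ≤ (∫ t in z..t₀, 2 * ‖g t‖) * φ t₀ := by
            calc φ t₀ ≤ ∫ t in z..t₀, 2 * ‖g t‖ * φ t := hstep1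
              _ ≤ ∫ t in z..t₀, 2 * ‖g t‖ * φ t₀ := hstep2
              _ = (∫ t in z..t₀, 2 * ‖g t‖) * φ t₀ := hstep3
          nlinarith [hφnn t₀, hstep4, hwψ]
        refine ⟨w, ?_, hw.1, hw.2.trans (min_le_left _ _)⟩
        show φ w = 0
        exact le_antisymm (le_trans (hmax (Set.right_mem_Icc.2 hzw)) ht₀0) (hφnn w)
    exact hsubset ⟨hx₀, le_rfl⟩
  intro x hx
  ext i j
  have hx0 : φ x = 0 := hzero x hx
  have hterm : ‖P x i j - Q x i j‖ = 0 := by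
    have hj := (Finset.sum_eq_zero_iff_of_nonneg
      (fun i _ => Finset.sum_nonneg fun j _ => norm_nonneg _)).1 hx0 i (Finset.mem_univ i)
    exact (Finset.sum_eq_zero_iff_of_nonneg
      (fun j _ => norm_nonneg _)).1 hj j (Finset.mem_univ j)
  have := norm_eq_zero.1 hterm
  exact sub_eq_zero.1 this

theorem partition_product (f : ℝ → ℂ)
    (hf : LocallyIntegrableOn f (Set.Ici 0))
    (n : ℕ) (u : Fin (n + 1) → ℝ) (hu : StrictMono u) (hu0 : 0 ≤ u 0)
    (Gj : Fin n → ℝ → Matrix (Fin 2) (Fin 2) ℂ)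
    (hGj : ∀ j : Fin n,
      IsSolutionOf (Set.indicator (Set.Ico (u j.castSucc) (u j.succ)) f) (Gj j))
    (G : ℝ → Matrix (Fin 2) (Fin 2) ℂ)
    (hG : IsSolutionOf (Set.indicator (Set.Ico (u 0) (u (Fin.last n))) f) G) :
    ∀ x : ℝ, 0 ≤ x →
      G x = (List.ofFn fun j : Fin n => Gj j x).reverse.prod := by
  have hfint : ∀ x : ℝ, 0 ≤ x → IntervalIntegrable f volume 0 x := by
    intro x hx
    have h1 : IntegrableOn f (Set.Icc 0 x) volume :=
      hf.integrableOn_compact_subset Set.Icc_subset_Ici_self isCompact_Icc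
    rw [intervalIntegrable_iff_integrableOn_Ioc_of_le hx]
    exact h1.mono_set Set.Ioc_subset_Icc_self
  have hindint : ∀ (a b x : ℝ), 0 ≤ x →
      IntervalIntegrable (Set.indicator (Set.Ico a b) f) volume 0 x := by
    intro a b x hx
    rw [intervalIntegrable_iff_integrableOn_Ioc_of_le hx]
    exact ((intervalIntegrable_iff_integrableOn_Ioc_of_le hx).1
      (hfint x hx)).indicator measurableSet_Ico
  have key : ∀ m : ℕ, ∀ hm : m ≤ n,
      IsSolutionOf (Set.indicator (Set.Ico (u 0) (u ⟨m, Nat.lt_succ_of_le hm⟩)) f)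
        (fun x => (List.ofFn fun j : Fin m => Gj (Fin.castLE hm j) x).reverse.prod) := by
    intro m
    induction m with
    | zero =>
      intro hm
      have he : Set.Ico (u 0) (u ⟨0, Nat.lt_succ_of_le hm⟩) = (∅ : Set ℝ) := by
        have h0 : u ⟨0, Nat.lt_succ_of_le hm⟩ = u 0 := rfl
        rw [h0, Set.Ico_self]
      constructor
      · simp only [List.ofFn_zero, List.reverse_nil, List.prod_nil]
        exact continuousOn_const
      · intro x hx i j
        simp only [List.ofFn_zero, List.reverse_nil, List.prod_nil]
        rw [he, Set.indicator_empty]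
        have hz : ∀ t : ℝ,
            (WmatOf (fun _ => (0:ℂ)) t * (1 : Matrix (Fin 2) (Fin 2) ℂ)) i j = 0 := by
          intro t
          rw [Matrix.mul_one]
          fin_cases i <;> fin_cases j <;> simp [WmatOf]
        simp [hz]
    | succ m ih =>
      intro hm
      have hm' : m ≤ n := Nat.le_of_succ_le hm
      have hmn : m < n := hm
      have hP := ih hm'
      have hQ' : IsSolutionOf (Set.indicator (Set.Ico (u ⟨m, Nat.lt_succ_of_le hm'⟩)
          (u ⟨m + 1, Nat.lt_succ_of_le hm⟩)) f) (Gj ⟨m, hmn⟩) := hGj ⟨m, hmn⟩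
      have h1 : u 0 ≤ u ⟨m, Nat.lt_succ_of_le hm'⟩ := hu.monotone (Fin.zero_le _)
      have h2 : u ⟨m, Nat.lt_succ_of_le hm'⟩ ≤ u ⟨m + 1, Nat.lt_succ_of_le hm⟩ :=
        (hu (Fin.mk_lt_mk.2 (Nat.lt_succ_self m))).le
      have hglue := glue hfint hu0 h1 h2 hP hQ'
      have hfun : (fun x =>
            (List.ofFn fun j : Fin (m + 1) => Gj (Fin.castLE hm j) x).reverse.prod)
          = fun x => Gj ⟨m, hmn⟩ x *
            (List.ofFn fun j : Fin m => Gj (Fin.castLE hm' j) x).reverse.prod := by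
        funext x
        rw [List.ofFn_succ', List.concat_eq_append, List.reverse_append]
        rfl
      rw [hfun]
      exact hglue
  have hSn := key n le_rfl
  have hSn' : IsSolutionOf (Set.indicator (Set.Ico (u 0) (u (Fin.last n))) f)
      (fun x => (List.ofFn fun j : Fin n => Gj j x).reverse.prod) := hSn
  intro x hx
  exact sol_unique (hindint (u 0) (u (Fin.last n))) hG hSn' x hx
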